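/- Let 𝒜 be a unital C*-algebra (over ℂ) and let A, B ∈ 𝒜 be self-adjoint elements satisfying A²B + BA² = 2ABA. Then AB = BA. (This is the claim that at the parameter value λ = 1 the Bratteli–Elliott–Evans–Kishimoto relation A²B + BA² = 2λABA + 4(1−λ²)B forces commutativity, so the algebra corresponds to the classical 2-sphere.) -/

import Mathlib

open NormedSpace Nat

/-- If `X*B = B*X + E` and `X` commutes with `E`, then
`X^(n+1) * B = B * X^(n+1) + (n+1) • (E * X^n)`. -/
lemma beek_pow_comm {𝒜 : Type*} [Ring 𝒜] {X B E : 𝒜}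
    (h1 : X * B = B * X + E) (h2 : X * E = E * X) :
    ∀ n : ℕ, X ^ (n + 1) * B = B * X ^ (n + 1) + (n + 1) • (E * X ^ n) := by
  intro n
  induction n with
  | zero => simpa using h1
  | succ n ih =>
    have hXE : X * (E * X ^ n) = E * X ^ (n + 1) := by
      rw [← mul_assoc, h2, mul_assoc, ← _root_.pow_succ']
    calc X ^ (n + 2) * B = X * (X ^ (n + 1) * B) := by
          rw [← mul_assoc, ← _root_.pow_succ']
      _ = X * (B * X ^ (n + 1)) + (n + 1) • (X * (E * X ^ n)) := by
          rw [ih, mul_add, mul_smul_comm]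
      _ = (X * B) * X ^ (n + 1) + (n + 1) • (E * X ^ (n + 1)) := by
          rw [hXE, mul_assoc]
      _ = B * X ^ (n + 2) + (n + 2) • (E * X ^ (n + 1)) := by
          rw [h1, add_mul, mul_assoc, ← _root_.pow_succ', add_assoc]
          congr 1
          rw [succ_nsmul (E * X ^ (n + 1)) (n + 1)]
          exact add_comm _ _

/-- Key exponential identity: if `X*B = B*X + E` and `X` commutes with `E`,
then `exp X * B = B * exp X + E * exp X`. -/
lemma beek_exp_comm {𝒜 : Type*} [NormedRing 𝒜] [CompleteSpace 𝒜] [NormedAlgebra ℂ 𝒜]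
    {X B E : 𝒜} (h1 : X * B = B * X + E) (h2 : X * E = E * X) :
    exp X * B = B * exp X + E * exp X := by
  have hsum : Summable fun n : ℕ => (n !⁻¹ : ℂ) • X ^ n := expSeries_summable' (𝕂 := ℂ) X
  have hsumB : Summable fun n : ℕ => B * ((n !⁻¹ : ℂ) • X ^ n) := hsum.mul_left B
  have hsumE : Summable fun n : ℕ => E * ((n !⁻¹ : ℂ) • X ^ n) := hsum.mul_left E
  set g : ℕ → 𝒜 := fun n => (n !⁻¹ : ℂ) • (n • (E * X ^ (n - 1))) with hg
  have hg0 : g 0 = 0 := by simp [hg]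
  have hgsucc : ∀ n : ℕ, g (n + 1) = E * ((n !⁻¹ : ℂ) • X ^ n) := by
    intro n
    have hn1 : ((n : ℂ) + 1) ≠ 0 := by
      exact Nat.cast_add_one_ne_zero n
    have hfac : ((n + 1)!⁻¹ : ℂ) * ((n : ℂ) + 1) = (n !⁻¹ : ℂ) := by
      rw [Nat.factorial_succ]
      push_cast
      rw [mul_inv, mul_comm (((n : ℂ) + 1)⁻¹), mul_assoc, inv_mul_cancel₀ hn1, mul_one]
    simp only [hg, Nat.add_sub_cancel, ← Nat.cast_smul_eq_nsmul ℂ, smul_smul]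
    push_cast
    rw [hfac, mul_smul_comm]
  have hgsum : Summable g := by
    rw [← summable_nat_add_iff 1]
    exact hsumE.congr fun n => (hgsucc n).symm
  have hpow : ∀ n : ℕ, ((n !⁻¹ : ℂ) • X ^ n) * B
      = B * ((n !⁻¹ : ℂ) • X ^ n) + g n := by
    intro n
    cases n with
    | zero => simp [hg]
    | succ n =>
      rw [smul_mul_assoc, beek_pow_comm h1 h2 n]
      simp only [hg, Nat.add_sub_cancel, smul_add, mul_smul_comm]
  calc exp X * B = (∑' n : ℕ, (n !⁻¹ : ℂ) • X ^ n) * B := by rw [exp_eq_tsum ℂ]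
    _ = ∑' n : ℕ, ((n !⁻¹ : ℂ) • X ^ n) * B := (hsum.tsum_mul_right B).symm
    _ = ∑' n : ℕ, (B * ((n !⁻¹ : ℂ) • X ^ n) + g n) := tsum_congr hpow
    _ = (∑' n : ℕ, B * ((n !⁻¹ : ℂ) • X ^ n)) + ∑' n : ℕ, g n :=
        hsumB.tsum_add hgsum
    _ = B * exp X + E * exp X := by
        rw [hsum.tsum_mul_left B, exp_eq_tsum ℂ]
        congr 1
        rw [hgsum.tsum_eq_zero_add, hg0, zero_add]
        calc (∑' n : ℕ, g (n + 1)) = ∑' n : ℕ, E * ((n !⁻¹ : ℂ) • X ^ n) :=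
              tsum_congr hgsucc
          _ = E * ∑' n : ℕ, ((n !⁻¹ : ℂ) • X ^ n) := hsum.tsum_mul_left E

/-- In a unital C*-algebra, self-adjoint elements `A`, `B` with
`A²B + BA² = 2ABA` (the λ = 1 Bratteli–Elliott–Evans–Kishimoto relation)
commute: `AB = BA`. -/
theorem beek_lambda_one_commutes
    {𝒜 : Type*} [NormedRing 𝒜] [StarRing 𝒜] [CStarRing 𝒜]
    [CompleteSpace 𝒜] [NormedAlgebra ℂ 𝒜] [StarModule ℂ 𝒜]
    (A B : 𝒜) (hA : IsSelfAdjoint A) (hB : IsSelfAdjoint B)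
    (h : A ^ 2 * B + B * A ^ 2 = 2 * (A * B * A)) :
    A * B = B * A := by
  set D : 𝒜 := A * B - B * A with hD
  suffices hD0 : D = 0 by
    rw [hD] at hD0
    exact sub_eq_zero.mp hD0
  have hAD : A * D = D * A := by
    have h' : A * A * B + B * (A * A) = A * B * A + A * B * A := by
      rw [← two_mul]
      simpa [pow_two] using h
    have hkey : A * D - D * A = (A * A * B + B * (A * A)) - (A * B * A + A * B * A) := by
      rw [hD]
      noncomm_ring
    rw [h', sub_self] at hkey
    exact sub_eq_zero.mp hkey
  -- conjugate by the unitary exp((t*I) • A)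
  have key : ∀ t : ℝ, ‖B + (((t : ℂ) * Complex.I) • D)‖ = ‖B‖ := by
    intro t
    set z : ℂ := (t : ℂ) * Complex.I with hz
    set X : 𝒜 := z • A with hX
    set E : 𝒜 := z • D with hE
    have h1 : X * B = B * X + E := by
      simp only [hX, hE, smul_mul_assoc, mul_smul_comm, hD]
      rw [← smul_add]
      congr 1
      noncomm_ring
    have h2 : X * E = E * X := by
      simp only [hX, hE, smul_mul_assoc, mul_smul_comm, hAD]
    have hzc : star z = -z := by
      rw [Complex.star_def, hz, map_mul, Complex.conj_ofReal, Complex.conj_I, mul_neg]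
    have hXskew : X ∈ skewAdjoint 𝒜 := by
      rw [skewAdjoint.mem_iff, hX, star_smul, hA.star_eq, hzc, neg_smul]
    have hU : exp X ∈ unitary 𝒜 := by
      let +nondep : NormedAlgebra ℚ 𝒜 := .restrictScalars ℚ ℂ 𝒜
      exact exp_mem_unitary_of_mem_skewAdjoint hXskew
    have hid : exp X * B = (B + E) * exp X := by
      rw [beek_exp_comm h1 h2, add_mul]
    calc ‖B + E‖ = ‖(B + E) * exp X‖ := (CStarRing.norm_mul_mem_unitary _ hU).symm
      _ = ‖exp X * B‖ := by rw [hid]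
      _ = ‖B‖ := CStarRing.norm_mem_unitary_mul B hU
  by_contra hne
  have hDpos : 0 < ‖D‖ := norm_pos_iff.mpr hne
  set t : ℝ := (2 * ‖B‖ + 1) / ‖D‖ with ht
  have htpos : 0 < t := by positivity
  have hnorm : ‖(((t : ℂ) * Complex.I) • D)‖ = t * ‖D‖ := by
    rw [norm_smul]
    have : ‖(t : ℂ) * Complex.I‖ = |t| := by simp
    rw [this, abs_of_pos htpos]
  have hb := key t
  have hle : t * ‖D‖ ≤ 2 * ‖B‖ := by
    have h1 := norm_sub_le (B + (((t : ℂ) * Complex.I) • D)) B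
    rw [add_sub_cancel_left, hb, hnorm] at h1
    linarith
  rw [ht, div_mul_cancel₀ _ (ne_of_gt hDpos)] at hle
  linarith
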